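/- Let P be a user distribution on relevance vectors over a finite document set X with metric D, and suppose P is conditionally L-continuous with respect to (X, D). Fix x ∈ X and subsets S, S' ⊆ X. Then for every n ∈ ℕ and every pair of finite sequences x_1, …, x_n and x'_1, …, x'_n that enumerate (possibly with repetitions) all documents of S and of S' respectively, one has |μ(x|Z_S) − μ(x|Z_{S'})| ≤ 4·Σ_{j=1}^{n} D(x_j, x'_j). -/

import Mathlib

open scoped Classical
open Finset

/-- Probability of an event under a distribution `P` on relevance vectors. -/
noncomputable def pr {X : Type*} [Fintype X] [DecidableEq X]
    (P : (X → Bool) → ℝ) (E : Set (X → Bool)) : ℝ :=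
  ∑ π : X → Bool, if π ∈ E then P π else 0

/-- Conditional probability `P(E | F)`. -/
noncomputable def condPr {X : Type*} [Fintype X] [DecidableEq X]
    (P : (X → Bool) → ℝ) (E F : Set (X → Bool)) : ℝ :=
  pr P (E ∩ F) / pr P F

/-- The event `Z_S` that all documents in `S` are irrelevant. -/
def ZS {X : Type*} (S : Finset X) : Set (X → Bool) :=
  {π | ∀ s ∈ S, π s = false}

/-- Conditional pointwise mean `μ(x | Z_S)`. -/
noncomputable def condMean {X : Type*} [Fintype X] [DecidableEq X]
    (P : (X → Bool) → ℝ) (x : X) (S : Finset X) : ℝ :=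
  condPr P {π | π x = true} (ZS S)

section Aux

variable {X : Type*} [Fintype X] [DecidableEq X]

lemma my_pr_nonneg (P : (X → Bool) → ℝ) (hP0 : ∀ π, 0 ≤ P π) (E : Set (X → Bool)) :
    0 ≤ pr P E := by
  apply Finset.sum_nonneg
  intro π _
  split_ifs
  · exact hP0 π
  · exact le_rfl

lemma my_pr_mono (P : (X → Bool) → ℝ) (hP0 : ∀ π, 0 ≤ P π) {E F : Set (X → Bool)}
    (h : E ⊆ F) : pr P E ≤ pr P F := by
  apply Finset.sum_le_sum
  intro π _
  split_ifs with h1 h2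
  · exact le_rfl
  · exact absurd (h h1) h2
  · exact hP0 π
  · exact le_rfl

lemma my_pr_split (P : (X → Bool) → ℝ) (E C : Set (X → Bool)) :
    pr P E = pr P (E ∩ C) + pr P (E ∩ Cᶜ) := by
  unfold pr
  rw [← Finset.sum_add_distrib]
  apply Finset.sum_congr rfl
  intro π _
  by_cases hE : π ∈ E <;> by_cases hC : π ∈ C <;> simp [hE, hC]

lemma my_pr_iUnion_le (P : (X → Bool) → ℝ) (hP0 : ∀ π, 0 ≤ P π) {n : ℕ}
    (f : Fin n → Set (X → Bool)) :
    pr P (⋃ j, f j) ≤ ∑ j, pr P (f j) := by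
  have h : pr P (⋃ j, f j) ≤ ∑ π : X → Bool, ∑ j, (if π ∈ f j then P π else 0) := by
    apply Finset.sum_le_sum
    intro π _
    by_cases h : π ∈ ⋃ j, f j
    · obtain ⟨j0, hj0⟩ := Set.mem_iUnion.mp h
      rw [if_pos h]
      have hle := Finset.single_le_sum (f := fun j => if π ∈ f j then P π else 0)
        (fun j _ => by split_ifs; exacts [hP0 π, le_rfl])
        (Finset.mem_univ j0)
      simpa [hj0] using hle
    · rw [if_neg h]
      apply Finset.sum_nonneg
      intro j _
      split_ifs
      · exact hP0 π
      · exact le_rfl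
  calc pr P (⋃ j, f j) ≤ _ := h
    _ = ∑ j, pr P (f j) := Finset.sum_comm

lemma ZS_union (S S' : Finset X) : ZS (S ∪ S') = ZS S ∩ ZS S' := by
  ext π
  simp [ZS, Finset.mem_union, or_imp, forall_and]

lemma condMean_nonneg (P : (X → Bool) → ℝ) (hP0 : ∀ π, 0 ≤ P π)
    (x : X) (S : Finset X) : 0 ≤ condMean P x S :=
  div_nonneg (my_pr_nonneg P hP0 _) (my_pr_nonneg P hP0 _)

lemma condMean_mem_zero (P : (X → Bool) → ℝ) {x : X} {S : Finset X} (hx : x ∈ S) :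
    condMean P x S = 0 := by
  have h : ({π : X → Bool | π x = true} ∩ ZS S) = ∅ := by
    ext π
    simp only [Set.mem_inter_iff, Set.mem_setOf_eq, Set.mem_empty_iff_false, iff_false]
    rintro ⟨h1, h2⟩
    have := h2 x hx
    rw [h1] at this
    simp at this
  unfold condMean condPr
  rw [h]
  simp [pr]

/-- The key arithmetic fact. -/
lemma aux_frac (a b v w : ℝ) (hv : 0 < v) (hw : 0 ≤ w) (ha0 : 0 ≤ a) (hav : a ≤ v)
    (hb0 : 0 ≤ b) (hbw : b ≤ w) :
    |a / v - (a + b) / (v + w)| ≤ w / (v + w) := by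
  have hu : 0 < v + w := by linarith
  have h1 : a / v - (a + b) / (v + w) = (a * w - b * v) / (v * (v + w)) := by
    field_simp
    ring
  have key : |a * w - b * v| ≤ v * w := by
    rw [abs_le]
    constructor <;> nlinarith
  rw [h1, abs_div, abs_of_pos (mul_pos hv hu)]
  rw [div_le_div_iff₀ (mul_pos hv hu) hu]
  nlinarith [mul_le_mul_of_nonneg_right key hu.le, abs_nonneg (a * w - b * v)]

/-- One-sided estimate: conditioning additionally on `Z_{S'}`. -/
lemma condMean_union_sub_le
    [MetricSpace X]
    (P : (X → Bool) → ℝ)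
    (hP0 : ∀ π, 0 ≤ P π)
    (hZ : ∀ S : Finset X, 0 < pr P (ZS S))
    (hLip : ∀ (x y : X) (S : Finset X),
      |condMean P x S - condMean P y S| ≤ dist x y)
    (x : X) (S S' : Finset X) (n : ℕ) (xs xs' : Fin n → X)
    (hxs : Finset.image xs Finset.univ = S)
    (hxs' : Finset.image xs' Finset.univ = S') :
    |condMean P x (S ∪ S') - condMean P x S| ≤ ∑ j, dist (xs j) (xs' j) := by
  set B := ZS S with hB
  set C := ZS S' with hC
  set E := {π : X → Bool | π x = true} with hE
  set u := pr P B with hu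
  set v := pr P (B ∩ C) with hv
  set w := pr P (B ∩ Cᶜ) with hw
  have huv : u = v + w := my_pr_split P B C
  have hvpos : 0 < v := by
    have := hZ (S ∪ S')
    rwa [ZS_union] at this
  have hupos : 0 < u := hZ S
  have hwnn : 0 ≤ w := my_pr_nonneg P hP0 _
  set a := pr P (E ∩ (B ∩ C)) with ha
  set b := pr P ((E ∩ B) ∩ Cᶜ) with hb
  have hab : pr P (E ∩ B) = a + b := by
    rw [my_pr_split P (E ∩ B) C]
    congr 1
    rw [Set.inter_assoc]
  have hm1 : condMean P x (S ∪ S') = a / v := by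
    unfold condMean condPr
    rw [ZS_union]
  have hm2 : condMean P x S = (a + b) / u := by
    unfold condMean condPr
    rw [← hab]
  -- step 1: |a/v - (a+b)/u| ≤ w/u
  have step1 : |condMean P x (S ∪ S') - condMean P x S| ≤ w / u := by
    rw [hm1, hm2, huv]
    exact aux_frac a b v w hvpos hwnn (my_pr_nonneg P hP0 _)
      (my_pr_mono P hP0 (Set.inter_subset_right)) (my_pr_nonneg P hP0 _)
      (my_pr_mono P hP0 (fun π hπ => ⟨hπ.1.2, hπ.2⟩))
  -- step 2: w ≤ (∑ j, condMean P (xs' j) S) * u via union bound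
  have hsub : B ∩ Cᶜ ⊆ ⋃ j, ({π : X → Bool | π (xs' j) = true} ∩ B) := by
    rintro π ⟨hπB, hπC⟩
    have : ¬ (∀ s ∈ S', π s = false) := hπC
    push_neg at this
    obtain ⟨s, hsS', hs⟩ := this
    rw [← hxs'] at hsS'
    obtain ⟨j, _, hj⟩ := Finset.mem_image.mp hsS'
    refine Set.mem_iUnion.mpr ⟨j, ?_, hπB⟩
    simp only [Set.mem_setOf_eq, hj]
    revert hs
    cases π s <;> simp
  have hpr_eq : ∀ y : X, pr P ({π : X → Bool | π y = true} ∩ B) = condMean P y S * u := by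
    intro y
    unfold condMean condPr
    rw [div_mul_cancel₀]
    exact (hZ S).ne'
  have hcm_le : ∀ j : Fin n, condMean P (xs' j) S ≤ dist (xs j) (xs' j) := by
    intro j
    have h0 : condMean P (xs j) S = 0 :=
      condMean_mem_zero P (hxs ▸ Finset.mem_image_of_mem xs (Finset.mem_univ j))
    have := hLip (xs' j) (xs j) S
    rw [h0, sub_zero, dist_comm] at this
    exact (abs_le.mp this).2
  have step2 : w ≤ (∑ j, dist (xs j) (xs' j)) * u := by
    calc w ≤ pr P (⋃ j, ({π : X → Bool | π (xs' j) = true} ∩ B)) :=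
          my_pr_mono P hP0 hsub
      _ ≤ ∑ j, pr P ({π : X → Bool | π (xs' j) = true} ∩ B) :=
          my_pr_iUnion_le P hP0 _
      _ = ∑ j, condMean P (xs' j) S * u := by
          exact Finset.sum_congr rfl fun j _ => hpr_eq (xs' j)
      _ ≤ ∑ j, dist (xs j) (xs' j) * u := by
          refine Finset.sum_le_sum fun j _ => ?_
          exact mul_le_mul_of_nonneg_right (hcm_le j) hupos.le
      _ = (∑ j, dist (xs j) (xs' j)) * u := by rw [Finset.sum_mul]
  refine step1.trans ?_
  rw [div_le_iff₀ hupos]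
  exact step2

end Aux

theorem condMean_diff_le_four_sum_dist
    {X : Type*} [Fintype X] [DecidableEq X] [MetricSpace X]
    (P : (X → Bool) → ℝ)
    (hP0 : ∀ π, 0 ≤ P π) (hP1 : ∑ π : X → Bool, P π = 1)
    (hZ : ∀ S : Finset X, 0 < pr P (ZS S))
    (hLip : ∀ (x y : X) (S : Finset X),
      |condMean P x S - condMean P y S| ≤ dist x y)
    (x : X) (S S' : Finset X) (n : ℕ) (xs xs' : Fin n → X)
    (hxs : Finset.image xs Finset.univ = S)
    (hxs' : Finset.image xs' Finset.univ = S') :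
    |condMean P x S - condMean P x S'| ≤ 4 * ∑ j, dist (xs j) (xs' j) := by
  have h1 := condMean_union_sub_le P hP0 hZ hLip x S S' n xs xs' hxs hxs'
  have h2 := condMean_union_sub_le P hP0 hZ hLip x S' S n xs' xs hxs' hxs
  rw [Finset.union_comm S' S] at h2
  have hd : ∑ j, dist (xs' j) (xs j) = ∑ j, dist (xs j) (xs' j) := by
    exact Finset.sum_congr rfl fun j _ => dist_comm _ _
  rw [hd] at h2
  have hnn : 0 ≤ ∑ j, dist (xs j) (xs' j) :=
    Finset.sum_nonneg fun j _ => dist_nonneg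
  have htri := abs_sub_le (condMean P x S) (condMean P x (S ∪ S')) (condMean P x S')
  rw [abs_sub_comm (condMean P x S) (condMean P x (S ∪ S'))] at htri
  linarith
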